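/- Let σ² > 0, L ≥ 2 an integer, c₁, …, c_L > 0, c₀ = (Σ_{ℓ=1}^L 1/c_ℓ)⁻¹, and γ > σ²·max(√c₁, …, √c_L). Let Θ be the (L+1)×(L+1) real symmetric matrix indexed by 0, …, L with diagonal entries Θ_{ℓℓ} = c_ℓ(γ² − σ⁴c_ℓ)(γ + σ²)²/γ² for ℓ = 0, …, L, off-diagonal entries Θ_{0ℓ} = Θ_{ℓ0} = c₀(γ² − σ⁴c_ℓ)(γ + σ²)²/γ² for ℓ = 1, …, L, and all other entries zero. Then Θ is positive definite. -/

import Mathlib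

open scoped BigOperators
open Matrix in

/-- for `L ≥ 2`, `c₁, …, c_L > 0`, `c₀ = (Σ 1/c_ℓ)⁻¹` and
`γ > σ²·max(√c₁, …, √c_L)`, the arrowhead covariance matrix `Θ` is positive definite. -/
theorem Theta_posDef (s : ℝ) (hs : 0 < s) (L : ℕ) (hL : 2 ≤ L)
    (c : Fin L → ℝ) (hc : ∀ ℓ, 0 < c ℓ) (γ : ℝ)
    (hγ : ∀ ℓ, s * Real.sqrt (c ℓ) < γ) :
    ∀ c₀ : ℝ, c₀ = (∑ ℓ, (c ℓ)⁻¹)⁻¹ →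
    ∀ cc : Fin (L + 1) → ℝ, cc = Fin.cases c₀ c →
    ∀ Θ : Matrix (Fin (L + 1)) (Fin (L + 1)) ℝ,
      Θ = Matrix.of (fun i j =>
        if i = j then cc i * (γ ^ 2 - s ^ 2 * cc i) * (γ + s) ^ 2 / γ ^ 2
        else if i = 0 then c₀ * (γ ^ 2 - s ^ 2 * cc j) * (γ + s) ^ 2 / γ ^ 2
        else if j = 0 then c₀ * (γ ^ 2 - s ^ 2 * cc i) * (γ + s) ^ 2 / γ ^ 2
        else 0) →
    Θ.PosDef := by
  intro c₀ hc₀ cc hcc Θ hΘ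
  have hne : Nonempty (Fin L) := ⟨⟨0, by omega⟩⟩
  have hγ0 : 0 < γ := lt_of_le_of_lt (by positivity) (hγ ⟨0, by omega⟩)
  have hD : ∀ ℓ, 0 < γ ^ 2 - s ^ 2 * c ℓ := by
    intro ℓ
    have h1 : s * Real.sqrt (c ℓ) < γ := hγ ℓ
    have h3 : (Real.sqrt (c ℓ)) ^ 2 = c ℓ := Real.sq_sqrt (hc ℓ).le
    nlinarith [Real.sqrt_nonneg (c ℓ), mul_pos hs (Real.sqrt_pos.2 (hc ℓ))]
  have hSpos : 0 < ∑ ℓ, (c ℓ)⁻¹ :=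
    Finset.sum_pos (fun ℓ _ => inv_pos.2 (hc ℓ)) Finset.univ_nonempty
  have hc₀pos : 0 < c₀ := hc₀ ▸ inv_pos.2 hSpos
  have hKpos : 0 < (γ + s) ^ 2 / γ ^ 2 := by positivity
  -- the key sum identity
  have hW : c₀ * ∑ ℓ, (γ ^ 2 - s ^ 2 * c ℓ) / c ℓ = γ ^ 2 - s ^ 2 * (L : ℝ) * c₀ := by
    have h1 : ∑ ℓ, (γ ^ 2 - s ^ 2 * c ℓ) / c ℓ = ∑ ℓ, (γ ^ 2 * (c ℓ)⁻¹ - s ^ 2) := by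
      refine Finset.sum_congr rfl fun ℓ _ => ?_
      field_simp [(hc ℓ).ne']
    rw [h1, Finset.sum_sub_distrib, ← Finset.mul_sum, Finset.sum_const, Finset.card_univ,
      Fintype.card_fin, nsmul_eq_mul, hc₀, mul_sub]
    have h2 : (∑ ℓ, (c ℓ)⁻¹)⁻¹ * (γ ^ 2 * ∑ ℓ, (c ℓ)⁻¹) = γ ^ 2 := by
      rw [mul_comm (γ ^ 2), ← mul_assoc, inv_mul_cancel₀ hSpos.ne', one_mul]
    rw [h2]; ring
  -- the quadratic form identity
  have key : ∀ x : Fin (L + 1) → ℝ,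
      x ⬝ᵥ Θ *ᵥ x
        = ((γ + s) ^ 2 / γ ^ 2) * (s ^ 2 * c₀ ^ 2 * ((L : ℝ) - 1) * (x 0) ^ 2
            + ∑ ℓ, c ℓ * (γ ^ 2 - s ^ 2 * c ℓ) * (x ℓ.succ + (c₀ / c ℓ) * x 0) ^ 2) := by
    intro x
    have step1 : x ⬝ᵥ Θ *ᵥ x
        = c₀ * (γ ^ 2 - s ^ 2 * c₀) * ((γ + s) ^ 2 / γ ^ 2) * (x 0) ^ 2
        + (∑ m, c₀ * (γ ^ 2 - s ^ 2 * c m) * ((γ + s) ^ 2 / γ ^ 2) * (x 0 * x m.succ))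
        + ∑ ℓ, (c₀ * (γ ^ 2 - s ^ 2 * c ℓ) * ((γ + s) ^ 2 / γ ^ 2) * (x ℓ.succ * x 0)
            + c ℓ * (γ ^ 2 - s ^ 2 * c ℓ) * ((γ + s) ^ 2 / γ ^ 2) * x ℓ.succ ^ 2) := by
      subst hΘ hcc
      have hdot : x ⬝ᵥ (Matrix.of (fun i j =>
            if i = j then Fin.cases c₀ c i * (γ ^ 2 - s ^ 2 * Fin.cases c₀ c i) * (γ + s) ^ 2 / γ ^ 2
            else if i = 0 then c₀ * (γ ^ 2 - s ^ 2 * Fin.cases c₀ c j) * (γ + s) ^ 2 / γ ^ 2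
            else if j = 0 then c₀ * (γ ^ 2 - s ^ 2 * Fin.cases c₀ c i) * (γ + s) ^ 2 / γ ^ 2
            else 0) : Matrix (Fin (L+1)) (Fin (L+1)) ℝ) *ᵥ x
          = ∑ i, ∑ j, x i * ((if i = j then Fin.cases c₀ c i * (γ ^ 2 - s ^ 2 * Fin.cases c₀ c i) * (γ + s) ^ 2 / γ ^ 2
            else if i = 0 then c₀ * (γ ^ 2 - s ^ 2 * Fin.cases c₀ c j) * (γ + s) ^ 2 / γ ^ 2
            else if j = 0 then c₀ * (γ ^ 2 - s ^ 2 * Fin.cases c₀ c i) * (γ + s) ^ 2 / γ ^ 2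
            else 0) * x j) := by
        simp [dotProduct, Matrix.mulVec, Finset.mul_sum]
      rw [hdot, Fin.sum_univ_succ]
      congr 1
      · rw [Fin.sum_univ_succ]
        congr 1
        · simp; ring
        · refine Finset.sum_congr rfl fun m _ => ?_
          simp [Fin.succ_ne_zero, (Fin.succ_ne_zero m).symm]
          ring
      · refine Finset.sum_congr rfl fun ℓ _ => ?_
        rw [Fin.sum_univ_succ]
        congr 1
        · simp [Fin.succ_ne_zero]
          ring
        · simp [Fin.succ_ne_zero, Fin.succ_inj, mul_ite, ite_mul, Finset.sum_ite_eq]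
          ring
    rw [step1]
    set x0 := x 0 with hx0
    set y : Fin L → ℝ := fun ℓ => x ℓ.succ with hy
    set U := ∑ ℓ, (γ ^ 2 - s ^ 2 * c ℓ) * y ℓ with hU
    set V := ∑ ℓ, c ℓ * (γ ^ 2 - s ^ 2 * c ℓ) * y ℓ ^ 2 with hV
    set W := ∑ ℓ, (γ ^ 2 - s ^ 2 * c ℓ) / c ℓ with hWdef
    set K' := (γ + s) ^ 2 / γ ^ 2 with hK'
    have e1 : ∑ m, c₀ * (γ ^ 2 - s ^ 2 * c m) * K' * (x0 * y m) = c₀ * K' * x0 * U := by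
      rw [hU, Finset.mul_sum]; exact Finset.sum_congr rfl fun m _ => by ring
    have e2 : ∑ ℓ, (c₀ * (γ ^ 2 - s ^ 2 * c ℓ) * K' * (y ℓ * x0)
        + c ℓ * (γ ^ 2 - s ^ 2 * c ℓ) * K' * y ℓ ^ 2) = c₀ * K' * x0 * U + K' * V := by
      rw [Finset.sum_add_distrib, hU, hV, Finset.mul_sum, Finset.mul_sum]
      exact congrArg₂ (· + ·) (Finset.sum_congr rfl fun m _ => by ring)
        (Finset.sum_congr rfl fun m _ => by ring)
    have e3 : ∑ ℓ, c ℓ * (γ ^ 2 - s ^ 2 * c ℓ) * (y ℓ + (c₀ / c ℓ) * x0) ^ 2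
        = V + 2 * c₀ * x0 * U + c₀ ^ 2 * x0 ^ 2 * W := by
      have h : ∀ ℓ ∈ Finset.univ, c ℓ * (γ ^ 2 - s ^ 2 * c ℓ) * (y ℓ + (c₀ / c ℓ) * x0) ^ 2
          = c ℓ * (γ ^ 2 - s ^ 2 * c ℓ) * y ℓ ^ 2
            + 2 * c₀ * x0 * ((γ ^ 2 - s ^ 2 * c ℓ) * y ℓ)
            + c₀ ^ 2 * x0 ^ 2 * ((γ ^ 2 - s ^ 2 * c ℓ) / c ℓ) := by
        intro ℓ _
        field_simp [(hc ℓ).ne']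
        ring
      rw [Finset.sum_congr rfl h, Finset.sum_add_distrib, Finset.sum_add_distrib,
        ← Finset.mul_sum, ← Finset.mul_sum, ← hU, ← hV, ← hWdef]
    rw [e1, e2, e3]
    have hW' : c₀ * W = γ ^ 2 - s ^ 2 * (L : ℝ) * c₀ := hW
    linear_combination (-(K' * x0 ^ 2 * c₀)) * hW'
  refine Matrix.PosDef.of_dotProduct_mulVec_pos ?_ ?_
  · -- Hermitian
    rw [hΘ]
    ext i j
    simp only [Matrix.conjTranspose_apply, Matrix.of_apply, star_trivial]
    by_cases hij : i = j
    · subst hij; simp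
    · by_cases hi : i = 0
      · subst hi
        have hj : j ≠ 0 := fun h => hij h.symm
        simp [hij, Ne.symm hij, hj, Ne.symm hj]
      · by_cases hj : j = 0
        · subst hj
          simp [hij, Ne.symm hij, hi, Ne.symm hi]
        · simp [hij, Ne.symm hij, hi, hj]
  · -- positivity
    intro x hx
    have hstar : star x = x := by
      funext i; simp
    rw [hstar, key x]
    refine mul_pos hKpos ?_
    have hL1 : (0 : ℝ) < (L : ℝ) - 1 := by
      have : (2 : ℝ) ≤ (L : ℝ) := by exact_mod_cast hL
      linarith
    have hsum_nonneg : 0 ≤ ∑ ℓ, c ℓ * (γ ^ 2 - s ^ 2 * c ℓ) * (x ℓ.succ + (c₀ / c ℓ) * x 0) ^ 2 :=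
      Finset.sum_nonneg fun ℓ _ =>
        mul_nonneg (mul_nonneg (hc ℓ).le (hD ℓ).le) (sq_nonneg _)
    by_cases h0 : x 0 = 0
    · -- some later coordinate is nonzero
      obtain ⟨i, hi⟩ := Function.ne_iff.mp hx
      have hi0 : i ≠ 0 := fun h => hi (h ▸ h0)
      obtain ⟨m, rfl⟩ := Fin.eq_succ_of_ne_zero hi0
      have hpos : 0 < ∑ ℓ, c ℓ * (γ ^ 2 - s ^ 2 * c ℓ) * (x ℓ.succ + (c₀ / c ℓ) * x 0) ^ 2 := by
        refine Finset.sum_pos' (fun ℓ _ =>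
          mul_nonneg (mul_nonneg (hc ℓ).le (hD ℓ).le) (sq_nonneg _)) ⟨m, Finset.mem_univ m, ?_⟩
        have : (x m.succ + (c₀ / c m) * x 0) ^ 2 = (x m.succ) ^ 2 := by rw [h0]; ring
        rw [this]
        have hsq : 0 < (x m.succ) ^ 2 := sq_pos_iff.mpr hi
        exact mul_pos (mul_pos (hc m) (hD m)) hsq
      have h00 : s ^ 2 * c₀ ^ 2 * ((L : ℝ) - 1) * (x 0) ^ 2 = 0 := by rw [h0]; ring
      linarith
    · have hpos0 : 0 < s ^ 2 * c₀ ^ 2 * ((L : ℝ) - 1) * (x 0) ^ 2 := by positivity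
      linarith
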